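/- arXiv:1011.6267 — 4 statements merged into one kernel-verified Lean document; each statement's English description precedes it below -/
import Mathlib

section
/- Let K1 and K2 be two minimal X–Y separators of G. Then both Top(K1,K2) and Bottom(K1,K2) are X–Y separators of G; moreover, Bottom(K1,K2) ≥ K1 and Bottom(K1,K2) ≥ K2. -/
variable {V : Type*}

/-- `K` is an `X`–`Y` separator of `G`: `K` avoids `X ∪ Y` and every walk
from a vertex of `X` to a vertex of `Y` meets `K` (i.e. there is no
`X`–`Y` path in `G \ K`). -/
def IsSeparator (G : SimpleGraph V) (X Y K : Set V) : Prop :=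
  K ⊆ (X ∪ Y)ᶜ ∧
  ∀ x ∈ X, ∀ y ∈ Y, ∀ w : G.Walk x y, ∃ v ∈ w.support, v ∈ K

/-- `NR G A B`: the vertices of `G \ B` that are not reachable from `A` in `G \ B`. -/
def NR (G : SimpleGraph V) (A B : Set V) : Set V :=
  {v | v ∉ B ∧ ¬ ∃ a ∈ A, ∃ w : G.Walk a v, ∀ x ∈ w.support, x ∉ B}

/-- `Reach G A B`: the vertices reachable from `A` in `G \ B`. -/
def Reach (G : SimpleGraph V) (A B : Set V) : Set V :=
  {v | ∃ a ∈ A, ∃ w : G.Walk a v, ∀ x ∈ w.support, x ∉ B}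

/-- The order on `X`–`Y` separators: `K1 ≤ K2` iff `NR(G,Y,K1) ⊆ NR(G,Y,K2)`. -/
def SepLE (G : SimpleGraph V) (Y K1 K2 : Set V) : Prop :=
  NR G Y K1 ⊆ NR G Y K2

/-- The strict order on `X`–`Y` separators. -/
def SepLT (G : SimpleGraph V) (Y K1 K2 : Set V) : Prop :=
  NR G Y K1 ⊆ NR G Y K2 ∧ NR G Y K1 ≠ NR G Y K2

/-- A minimal `X`–`Y` separator: no proper subset is an `X`–`Y` separator. -/
def IsMinimalSeparator (G : SimpleGraph V) (X Y K : Set V) : Prop :=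
  IsSeparator G X Y K ∧ ∀ K' ⊂ K, ¬ IsSeparator G X Y K'

/-- An important `X`–`Y` separator: a minimal separator `K` such that there is
no separator `K'` with `K < K'` and `|K'| ≤ |K|`. -/
def IsImportantSeparator (G : SimpleGraph V) (X Y K : Set V) : Prop :=
  IsMinimalSeparator G X Y K ∧
  ¬ ∃ K', IsSeparator G X Y K' ∧ SepLT G Y K K' ∧ K'.ncard ≤ K.ncard

/-- The minimum size of an `X`–`Y` separator of `G`. -/
noncomputable def minSepSize (G : SimpleGraph V) (X Y : Set V) : ℕ :=
  sInf {n | ∃ K, IsSeparator G X Y K ∧ K.ncard = n}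

/-- The excess of a separator: its size minus the minimum separator size. -/
noncomputable def excess (G : SimpleGraph V) (X Y K : Set V) : ℕ :=
  K.ncard - minSepSize G X Y

/-- The graph `Pr(G,X,Y,K)`: the vertices `NR(G,Y,K) \ X` are deleted (here:
made isolated), and every vertex of `X` is made adjacent to every vertex of `K`. -/
def PrGraph (G : SimpleGraph V) (X Y K : Set V) : SimpleGraph V where
  Adj u v := u ≠ v ∧ u ∉ NR G Y K \ X ∧ v ∉ NR G Y K \ X ∧
    (G.Adj u v ∨ (u ∈ X ∧ v ∈ K) ∨ (u ∈ K ∧ v ∈ X))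
  symm := by
    constructor
    rintro u v ⟨h1, h2, h3, h4⟩
    refine ⟨h1.symm, h3, h2, ?_⟩
    rcases h4 with h | h | h
    · exact Or.inl h.symm
    · exact Or.inr (Or.inr ⟨h.2, h.1⟩)
    · exact Or.inr (Or.inl ⟨h.2, h.1⟩)
  loopless := by constructor; rintro v ⟨h1, -⟩; exact h1 rfl

/-- `NSet G X` is `N(X)`: the set of vertices outside `X` adjacent to a vertex of `X`. -/
def NSet (G : SimpleGraph V) (X : Set V) : Set V :=
  {v | v ∉ X ∧ ∃ x ∈ X, G.Adj x v}

/-- `G` is `X`–`Y` normalized: `N(X)` is an `X`–`Y` separator and is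
the unique smallest `X`–`Y` separator. -/
def Normalized (G : SimpleGraph V) (X Y : Set V) : Prop :=
  IsSeparator G X Y (NSet G X) ∧
  ∀ K, IsSeparator G X Y K → K ≠ NSet G X → (NSet G X).ncard < K.ncard

/-- The cover excess `CE(S)`: the minimum excess of an `X`–`Y` separator disjoint from `S`. -/
noncomputable def CE (G : SimpleGraph V) (X Y S : Set V) : ℕ :=
  sInf {n | ∃ K, IsSeparator G X Y K ∧ Disjoint K S ∧ excess G X Y K = n}

/-- A witness of `S`: an `X`–`Y` separator disjoint from `S` whose excess equals `CE(S)`. -/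
noncomputable def IsWitness (G : SimpleGraph V) (X Y S K : Set V) : Prop :=
  IsSeparator G X Y K ∧ Disjoint K S ∧ excess G X Y K = CE G X Y S

/-- An important witness of `S`: a witness of `S` that is an important `X`–`Y` separator. -/
noncomputable def IsImportantWitness (G : SimpleGraph V) (X Y S K : Set V) : Prop :=
  IsWitness G X Y S K ∧ IsImportantSeparator G X Y K

/-- `Top(K1,K2) = K1^t ∪ K2^t ∪ (K1 ∩ K2)` where `K1^t = K1 ∩ NR(G,Y,K2)` and
`K2^t = K2 ∩ NR(G,Y,K1)`. -/
def TopSet (G : SimpleGraph V) (Y K1 K2 : Set V) : Set V :=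
  (K1 ∩ NR G Y K2) ∪ (K2 ∩ NR G Y K1) ∪ (K1 ∩ K2)

/-- `Bottom(K1,K2) = K1^b ∪ K2^b ∪ (K1 ∩ K2)` where
`K1^b = (K1 \ K1^t) \ (K1 ∩ K2)` and `K2^b = (K2 \ K2^t) \ (K1 ∩ K2)`. -/
def BottomSet (G : SimpleGraph V) (Y K1 K2 : Set V) : Set V :=
  ((K1 \ (K1 ∩ NR G Y K2)) \ (K1 ∩ K2)) ∪
    ((K2 \ (K2 ∩ NR G Y K1)) \ (K1 ∩ K2)) ∪ (K1 ∩ K2)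

section Aux

open SimpleGraph

variable {G : SimpleGraph V} {X Y K1 K2 : Set V}

private lemma notMem_NR {K : Set V} {v : V} (hv : v ∉ K) (h : v ∈ NR G Y K) :
    ¬ ∃ a ∈ Y, ∃ w : G.Walk a v, ∀ x ∈ w.support, x ∉ K := h.2

private lemma NR_of_bottom1 {b : V} (hb1 : b ∈ K1) (hb2 : b ∉ K2)
    (hbB : b ∉ BottomSet G Y K1 K2) : b ∈ NR G Y K2 := by
  by_contra hN
  apply hbB
  simp only [BottomSet, Set.mem_union, Set.mem_diff, Set.mem_inter_iff]
  tauto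

private lemma NR_of_bottom2 {b : V} (hb2 : b ∈ K2) (hb1 : b ∉ K1)
    (hbB : b ∉ BottomSet G Y K1 K2) : b ∈ NR G Y K1 := by
  by_contra hN
  apply hbB
  simp only [BottomSet, Set.mem_union, Set.mem_diff, Set.mem_inter_iff]
  tauto

/-- Key lemma for Bottom: a walk avoiding `Bottom(K1,K2)` starting at a vertex
reachable from `Y` avoiding `K1` and avoiding `K2` keeps this property at all
its vertices. -/
private lemma bottom_key :
    ∀ {a v : V} (w : G.Walk a v),
    (∀ x ∈ w.support, x ∉ BottomSet G Y K1 K2) →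
    (∃ y ∈ Y, ∃ w1 : G.Walk y a, ∀ z ∈ w1.support, z ∉ K1) →
    (∃ y ∈ Y, ∃ w2 : G.Walk y a, ∀ z ∈ w2.support, z ∉ K2) →
    ∀ x ∈ w.support,
      (∃ y ∈ Y, ∃ w1 : G.Walk y x, ∀ z ∈ w1.support, z ∉ K1) ∧
      (∃ y ∈ Y, ∃ w2 : G.Walk y x, ∀ z ∈ w2.support, z ∉ K2) := by
  intro a v w
  induction w with
  | nil =>
    intro _ h1 h2 x hx
    rw [Walk.support_nil, List.mem_singleton] at hx
    subst hx; exact ⟨h1, h2⟩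
  | @cons a b v h p ih =>
    intro havoid h1 h2 x hx
    rw [Walk.support_cons] at hx havoid
    have hbB : b ∉ BottomSet G Y K1 K2 :=
      havoid b (List.mem_cons_of_mem _ p.start_mem_support)
    obtain ⟨y1, hy1, w1, hw1⟩ := h1
    obtain ⟨y2, hy2, w2, hw2⟩ := h2
    -- b is not in K1
    have hbK1 : b ∉ K1 := by
      intro hb1
      by_cases hb2 : b ∈ K2
      · exact hbB (by simp only [BottomSet, Set.mem_union]; exact Or.inr ⟨hb1, hb2⟩)
      · have hNR := NR_of_bottom1 hb1 hb2 hbB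
        exact notMem_NR hb2 hNR ⟨y2, hy2, w2.concat h, by
          intro z hz
          rw [Walk.support_concat, List.mem_append,
            List.mem_singleton] at hz
          rcases hz with hz | hz
          · exact hw2 z hz
          · exact fun hk => hb2 (hz ▸ hk)⟩
    have hbK2 : b ∉ K2 := by
      intro hb2
      have hNR := NR_of_bottom2 hb2 hbK1 hbB
      exact notMem_NR hbK1 hNR ⟨y1, hy1, w1.concat h, by
        intro z hz
        rw [Walk.support_concat, List.mem_append,
          List.mem_singleton] at hz
        rcases hz with hz | hz
        · exact hw1 z hz
        · exact fun hk => hbK1 (hz ▸ hk)⟩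
    have h1b : ∃ y ∈ Y, ∃ w1 : G.Walk y b, ∀ z ∈ w1.support, z ∉ K1 :=
      ⟨y1, hy1, w1.concat h, by
        intro z hz
        rw [Walk.support_concat, List.mem_append,
          List.mem_singleton] at hz
        rcases hz with hz | hz
        · exact hw1 z hz
        · exact fun hk => hbK1 (hz ▸ hk)⟩
    have h2b : ∃ y ∈ Y, ∃ w2 : G.Walk y b, ∀ z ∈ w2.support, z ∉ K2 :=
      ⟨y2, hy2, w2.concat h, by
        intro z hz
        rw [Walk.support_concat, List.mem_append,
          List.mem_singleton] at hz
        rcases hz with hz | hz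
        · exact hw2 z hz
        · exact fun hk => hbK2 (hz ▸ hk)⟩
    rw [List.mem_cons] at hx
    rcases hx with hx | hx
    · subst hx; exact ⟨⟨y1, hy1, w1, hw1⟩, ⟨y2, hy2, w2, hw2⟩⟩
    · exact ih (fun z hz => havoid z (List.mem_cons_of_mem _ hz)) h1b h2b x hx

/-- Key lemma for Top: a walk avoiding `Top(K1,K2)` starting at a vertex
reachable from `X` avoiding `K1 ∪ K2` keeps this property at all its vertices. -/
private lemma top_key (hK1 : IsSeparator G X Y K1) (hK2 : IsSeparator G X Y K2) :
    ∀ {a v : V} (w : G.Walk a v),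
    (∀ x ∈ w.support, x ∉ TopSet G Y K1 K2) →
    (∃ x ∈ X, ∃ wx : G.Walk x a, ∀ z ∈ wx.support, z ∉ K1 ∪ K2) →
    ∀ u ∈ w.support, ∃ x ∈ X, ∃ wx : G.Walk x u, ∀ z ∈ wx.support, z ∉ K1 ∪ K2 := by
  intro a v w
  induction w with
  | nil =>
    intro _ h1 u hu
    rw [Walk.support_nil, List.mem_singleton] at hu
    subst hu; exact h1
  | @cons a b v h p ih =>
    intro havoid h1 u hu
    rw [Walk.support_cons] at hu havoid
    have hbT : b ∉ TopSet G Y K1 K2 :=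
      havoid b (List.mem_cons_of_mem _ p.start_mem_support)
    obtain ⟨x0, hx0, wx, hwx⟩ := h1
    -- b is not in K1 ∪ K2
    have hbK : b ∉ K1 ∪ K2 := by
      intro hb
      have hb12 : ¬ (b ∈ K1 ∧ b ∈ K2) := fun hb' =>
        hbT (by simp only [TopSet, Set.mem_union]; exact Or.inr hb')
      rcases hb with hb1 | hb2
      · -- b ∈ K1 \ K2
        have hb2 : b ∉ K2 := fun hb2 => hb12 ⟨hb1, hb2⟩
        have hbNR : b ∉ NR G Y K2 := fun hN =>
          hbT (by simp only [TopSet, Set.mem_union]; exact Or.inl (Or.inl ⟨hb1, hN⟩))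
        have hreach : ∃ y ∈ Y, ∃ wy : G.Walk y b, ∀ z ∈ wy.support, z ∉ K2 := by
          by_contra hc
          exact hbNR ⟨hb2, hc⟩
        obtain ⟨y0, hy0, wy, hwy⟩ := hreach
        -- build an X–Y walk avoiding K2
        obtain ⟨z, hz, hzK2⟩ := hK2.2 x0 hx0 y0 hy0 ((wx.concat h).append wy.reverse)
        have : z ∉ K2 := by
          rw [Walk.support_append] at hz
          rcases List.mem_append.mp hz with hz | hz
          · rw [Walk.support_concat, List.mem_append,
              List.mem_singleton] at hz
            rcases hz with hz | hz
            · exact fun h2 => hwx z hz (Or.inr h2)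
            · subst hz; exact hb2
          · have hz' : z ∈ wy.reverse.support := List.mem_of_mem_tail hz
            rw [Walk.support_reverse, List.mem_reverse] at hz'
            exact hwy z hz'
        exact this hzK2
      · -- b ∈ K2 \ K1
        have hb1 : b ∉ K1 := fun hb1 => hb12 ⟨hb1, hb2⟩
        have hbNR : b ∉ NR G Y K1 := fun hN =>
          hbT (by simp only [TopSet, Set.mem_union]; exact Or.inl (Or.inr ⟨hb2, hN⟩))
        have hreach : ∃ y ∈ Y, ∃ wy : G.Walk y b, ∀ z ∈ wy.support, z ∉ K1 := by
          by_contra hc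
          exact hbNR ⟨hb1, hc⟩
        obtain ⟨y0, hy0, wy, hwy⟩ := hreach
        obtain ⟨z, hz, hzK1⟩ := hK1.2 x0 hx0 y0 hy0 ((wx.concat h).append wy.reverse)
        have : z ∉ K1 := by
          rw [Walk.support_append] at hz
          rcases List.mem_append.mp hz with hz | hz
          · rw [Walk.support_concat, List.mem_append,
              List.mem_singleton] at hz
            rcases hz with hz | hz
            · exact fun h1' => hwx z hz (Or.inl h1')
            · subst hz; exact hb1
          · have hz' : z ∈ wy.reverse.support := List.mem_of_mem_tail hz
            rw [Walk.support_reverse, List.mem_reverse] at hz'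
            exact hwy z hz'
        exact this hzK1
    have h1b : ∃ x ∈ X, ∃ wx : G.Walk x b, ∀ z ∈ wx.support, z ∉ K1 ∪ K2 :=
      ⟨x0, hx0, wx.concat h, by
        intro z hz
        rw [Walk.support_concat, List.mem_append,
          List.mem_singleton] at hz
        rcases hz with hz | hz
        · exact hwx z hz
        · exact fun hk => hbK (hz ▸ hk)⟩
    rw [List.mem_cons] at hu
    rcases hu with hu | hu
    · subst hu; exact ⟨x0, hx0, wx, hwx⟩
    · exact ih (fun z hz => havoid z (List.mem_cons_of_mem _ hz)) h1b u hu

end Aux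

/-- Let `K1`, `K2` be two minimal `X`–`Y` separators of `G`.
Then both `Top(K1,K2)` and `Bottom(K1,K2)` are `X`–`Y` separators; moreover,
`Bottom(K1,K2) ≥ K1` and `Bottom(K1,K2) ≥ K2`. -/
theorem top_bottom_separator
    {V : Type*} [Fintype V] (G : SimpleGraph V) (X Y K1 K2 : Set V)
    (hXY : Disjoint X Y)
    (hK1 : IsMinimalSeparator G X Y K1) (hK2 : IsMinimalSeparator G X Y K2) :
    IsSeparator G X Y (TopSet G Y K1 K2) ∧
    IsSeparator G X Y (BottomSet G Y K1 K2) ∧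
    SepLE G Y K1 (BottomSet G Y K1 K2) ∧
    SepLE G Y K2 (BottomSet G Y K1 K2) := by
  obtain ⟨hK1, -⟩ := hK1
  obtain ⟨hK2, -⟩ := hK2
  have hnK1 : ∀ v ∈ X ∪ Y, v ∉ K1 := fun v hv hvK => hK1.1 hvK hv
  have hnK2 : ∀ v ∈ X ∪ Y, v ∉ K2 := fun v hv hvK => hK2.1 hvK hv
  have hTop : IsSeparator G X Y (TopSet G Y K1 K2) := by
    constructor
    · intro v hv
      rcases hv with (⟨h, -⟩ | ⟨h, -⟩) | ⟨h, -⟩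
      · exact hK1.1 h
      · exact hK2.1 h
      · exact hK1.1 h
    · intro x hx y hy w
      by_contra hc
      push_neg at hc
      have hbase : ∃ x0 ∈ X, ∃ wx : G.Walk x0 x, ∀ z ∈ wx.support, z ∉ K1 ∪ K2 := by
        refine ⟨x, hx, SimpleGraph.Walk.nil, ?_⟩
        intro z hz
        rw [SimpleGraph.Walk.support_nil, List.mem_singleton] at hz
        rw [hz]
        rintro (h | h)
        · exact hnK1 x (Or.inl hx) h
        · exact hnK2 x (Or.inl hx) h
      obtain ⟨x', hx', wx, hwx⟩ := top_key hK1 hK2 w hc hbase y w.end_mem_support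
      obtain ⟨z, hz, hzK1⟩ := hK1.2 x' hx' y hy wx
      exact hwx z hz (Or.inl hzK1)
  have hbase' : ∀ y ∈ Y,
      (∃ y0 ∈ Y, ∃ w1 : G.Walk y0 y, ∀ z ∈ w1.support, z ∉ K1) ∧
      (∃ y0 ∈ Y, ∃ w2 : G.Walk y0 y, ∀ z ∈ w2.support, z ∉ K2) := by
    intro y hy
    constructor
    · refine ⟨y, hy, SimpleGraph.Walk.nil, ?_⟩
      intro z hz
      rw [SimpleGraph.Walk.support_nil, List.mem_singleton] at hz
      rw [hz]; exact hnK1 y (Or.inr hy)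
    · refine ⟨y, hy, SimpleGraph.Walk.nil, ?_⟩
      intro z hz
      rw [SimpleGraph.Walk.support_nil, List.mem_singleton] at hz
      rw [hz]; exact hnK2 y (Or.inr hy)
  have hBot : IsSeparator G X Y (BottomSet G Y K1 K2) := by
    constructor
    · intro v hv
      rcases hv with (⟨⟨h, -⟩, -⟩ | ⟨⟨h, -⟩, -⟩) | ⟨h, -⟩
      · exact hK1.1 h
      · exact hK2.1 h
      · exact hK1.1 h
    · intro x hx y hy w
      by_contra hc
      push_neg at hc
      have hc' : ∀ v ∈ w.reverse.support, v ∉ BottomSet G Y K1 K2 := by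
        intro v hv
        rw [SimpleGraph.Walk.support_reverse, List.mem_reverse] at hv
        exact hc v hv
      obtain ⟨hb1, hb2⟩ := hbase' y hy
      obtain ⟨⟨y', hy', w1, hw1⟩, -⟩ :=
        bottom_key w.reverse hc' hb1 hb2 x w.reverse.end_mem_support
      obtain ⟨z, hz, hzK1⟩ := hK1.2 x hx y' hy' w1.reverse
      rw [SimpleGraph.Walk.support_reverse, List.mem_reverse] at hz
      exact hw1 z hz hzK1
  refine ⟨hTop, hBot, ?_, ?_⟩
  · intro v hv
    obtain ⟨hvK1, hvNR⟩ := hv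
    refine ⟨?_, ?_⟩
    · rintro ((⟨⟨h, -⟩, -⟩ | ⟨⟨h, hn⟩, -⟩) | ⟨h, -⟩)
      · exact hvK1 h
      · exact hn ⟨h, hvK1, hvNR⟩
      · exact hvK1 h
    · rintro ⟨y, hy, w, hw⟩
      obtain ⟨hb1, hb2⟩ := hbase' y hy
      obtain ⟨⟨y', hy', w1, hw1⟩, -⟩ := bottom_key w hw hb1 hb2 v w.end_mem_support
      exact hvNR ⟨y', hy', w1, hw1⟩
  · intro v hv
    obtain ⟨hvK2, hvNR⟩ := hv
    refine ⟨?_, ?_⟩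
    · rintro ((⟨⟨h, hn⟩, -⟩ | ⟨⟨h, -⟩, -⟩) | ⟨-, h⟩)
      · exact hn ⟨h, hvK2, hvNR⟩
      · exact hvK2 h
      · exact hvK2 h
    · rintro ⟨y, hy, w, hw⟩
      obtain ⟨hb1, hb2⟩ := hbase' y hy
      obtain ⟨-, ⟨y', hy', w2, hw2⟩⟩ := bottom_key w hw hb1 hb2 v w.end_mem_support
      exact hvNR ⟨y', hy', w2, hw2⟩
end

section
/- Let K and K' be two distinct minimal X–Y separators of G. Then NR(G,Y,K) is a proper subset of NR(G,Y,K') if and only if R(G,X,K) is a proper subset of R(G,X,K'). -/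
variable {V : Type*}

section Aux

variable {G : SimpleGraph V} {X Y K K' A B : Set V}

lemma reach_not_mem {v : V} (hv : v ∈ Reach G A B) : v ∉ B := by
  obtain ⟨a, ha, w, hw⟩ := hv
  exact hw v w.end_mem_support

lemma mem_reach_of_adj {u v : V} (hu : u ∈ Reach G A B) (h : G.Adj u v) (hv : v ∉ B) :
    v ∈ Reach G A B := by
  obtain ⟨a, ha, w, hw⟩ := hu
  refine ⟨a, ha, w.append (SimpleGraph.Walk.cons h SimpleGraph.Walk.nil), ?_⟩
  intro x hx
  rw [SimpleGraph.Walk.support_append] at hx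
  rcases List.mem_append.1 hx with h1 | h1
  · exact hw x h1
  · simp only [SimpleGraph.Walk.support_cons, SimpleGraph.Walk.support_nil,
      List.tail_cons, List.mem_singleton] at h1
    subst h1; exact hv

lemma mem_reach_of_support {a v u : V} (ha : a ∈ A) (w : G.Walk a v)
    (hw : ∀ x ∈ w.support, x ∉ B) (hu : u ∈ w.support) : u ∈ Reach G A B := by
  classical
  exact ⟨a, ha, w.takeUntil u hu,
    fun x hx => hw x (SimpleGraph.Walk.support_takeUntil_subset _ hu hx)⟩

lemma reach_disjoint (hK : IsSeparator G X Y K) {v : V}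
    (hx : v ∈ Reach G X K) (hy : v ∈ Reach G Y K) : False := by
  obtain ⟨a, ha, wx, hwx⟩ := hx
  obtain ⟨b, hb, wy, hwy⟩ := hy
  obtain ⟨u, hu, huK⟩ := hK.2 a ha b hb (wx.append wy.reverse)
  rw [SimpleGraph.Walk.support_append] at hu
  rcases List.mem_append.1 hu with h1 | h1
  · exact hwx u h1 huK
  · have : u ∈ wy.reverse.support := List.mem_of_mem_tail h1
    rw [SimpleGraph.Walk.support_reverse, List.mem_reverse] at this
    exact hwy u this huK

lemma mem_reach_self {x : V} (hK : IsSeparator G X Y K) (hx : x ∈ X) :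
    x ∈ Reach G X K := by
  refine ⟨x, hx, SimpleGraph.Walk.nil, ?_⟩
  intro u hu
  simp only [SimpleGraph.Walk.support_nil, List.mem_singleton] at hu
  subst hu
  intro hxK
  exact hK.1 hxK (Or.inl hx)

lemma adj_reach_of_walk {b : V} : ∀ {a : V} (p : G.Walk a b),
    a ∈ Reach G A K → b ∈ K → (∀ v ∈ p.support, v ∈ K → v = b) →
    ∃ u ∈ Reach G A K, G.Adj u b := by
  intro a p
  induction p with
  | nil => intro ha hb _; exact absurd hb (reach_not_mem ha)
  | @cons a c b h q ih =>
    intro ha hb hsupp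
    by_cases hm : c ∈ K
    · have : c = b := hsupp c (by simp) hm
      subst this
      exact ⟨a, ha, h⟩
    · exact ih (mem_reach_of_adj ha h hm) hb (fun v hv => hsupp v (by simp [hv]))

/-- For a minimal separator, every vertex of `K` has a neighbor reachable from `X`
and a neighbor reachable from `Y`. -/
lemma exists_adj_reach (hK : IsMinimalSeparator G X Y K) {k : V} (hk : k ∈ K) :
    (∃ u ∈ Reach G X K, G.Adj u k) ∧ (∃ u ∈ Reach G Y K, G.Adj u k) := by
  classical
  have hss : K \ {k} ⊂ K := Set.sdiff_singleton_ssubset.mpr hk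
  have hnot := hK.2 _ hss
  rw [IsSeparator, not_and] at hnot
  have h1 : K \ {k} ⊆ (X ∪ Y)ᶜ := fun v hv => hK.1.1 hv.1
  push_neg at hnot
  obtain ⟨x, hx, y, hy, w, hw⟩ := hnot h1
  have hprop : ∀ v ∈ w.support, v ∈ K → v = k := by
    intro v hv hvK
    by_contra hne
    exact hw v hv ⟨hvK, hne⟩
  obtain ⟨u, hu, huK⟩ := hK.1.2 x hx y hy w
  have hksupp : k ∈ w.support := (hprop u hu huK) ▸ hu
  constructor
  · refine adj_reach_of_walk (w.takeUntil k hksupp) (mem_reach_self hK.1 hx) hk ?_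
    intro v hv
    exact hprop v (SimpleGraph.Walk.support_takeUntil_subset _ hksupp hv)
  · have hy' : y ∈ Reach G Y K := by
      refine ⟨y, hy, SimpleGraph.Walk.nil, ?_⟩
      intro u hu
      simp only [SimpleGraph.Walk.support_nil, List.mem_singleton] at hu
      subst hu
      intro hyK
      exact hK.1.1 hyK (Or.inr hy)
    have hkrev : k ∈ w.reverse.support := by
      rw [SimpleGraph.Walk.support_reverse, List.mem_reverse]; exact hksupp
    refine adj_reach_of_walk (w.reverse.takeUntil k hkrev) hy' hk ?_
    intro v hv
    have := SimpleGraph.Walk.support_takeUntil_subset _ hkrev hv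
    rw [SimpleGraph.Walk.support_reverse, List.mem_reverse] at this
    exact hprop v this

lemma NR_mono_of_NR (hK : IsSeparator G X Y K) (hK' : IsSeparator G X Y K')
    (h : NR G Y K ⊆ NR G Y K') : Reach G X K ⊆ Reach G X K' := by
  intro v hv
  obtain ⟨a, ha, w, hw⟩ := hv
  refine ⟨a, ha, w, fun u hu => ?_⟩
  have hu' : u ∈ Reach G X K := mem_reach_of_support ha w hw hu
  have hNR : u ∈ NR G Y K := ⟨reach_not_mem hu', fun hc => reach_disjoint hK hu' hc⟩
  exact (h hNR).1

lemma reach_Y_back (hK : IsMinimalSeparator G X Y K) (hK' : IsSeparator G X Y K')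
    (h : Reach G X K ⊆ Reach G X K') : Reach G Y K' ⊆ Reach G Y K := by
  have hC : ∀ u ∈ Reach G Y K', u ∉ K := by
    intro u hu huK
    obtain ⟨⟨nb, hnb, hadj⟩, -⟩ := exists_adj_reach hK huK
    have huK' : u ∉ K' := reach_not_mem hu
    have : u ∈ Reach G X K' := mem_reach_of_adj (h hnb) hadj huK'
    exact reach_disjoint hK' this hu
  rintro v ⟨y, hy, w, hw⟩
  exact ⟨y, hy, w, fun u hu => hC u (mem_reach_of_support hy w hw hu)⟩

lemma NR_mono_of_reach (hK : IsMinimalSeparator G X Y K) (hK' : IsMinimalSeparator G X Y K')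
    (h : Reach G X K ⊆ Reach G X K') : NR G Y K ⊆ NR G Y K' := by
  have h6 := reach_Y_back hK hK'.1 h
  rintro v ⟨hvK, hvR⟩
  have hvR' : v ∉ Reach G Y K := hvR
  constructor
  · intro hvK'
    obtain ⟨-, nb, hnb, hadj⟩ := exists_adj_reach hK' hvK'
    exact hvR' (mem_reach_of_adj (h6 hnb) hadj hvK)
  · exact fun hc => hvR' (h6 hc)

end Aux

/-- Let `K`, `K'` be two distinct minimal `X`–`Y` separators of `G`.
Then `NR(G,Y,K) ⊂ NR(G,Y,K')` if and only if `R(G,X,K) ⊂ R(G,X,K')`. -/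
theorem NR_ssubset_iff_Reach_ssubset
    {V : Type*} [Fintype V] (G : SimpleGraph V) (X Y K K' : Set V)
    (hXY : Disjoint X Y)
    (hK : IsMinimalSeparator G X Y K) (hK' : IsMinimalSeparator G X Y K')
    (hne : K ≠ K') :
    NR G Y K ⊂ NR G Y K' ↔ Reach G X K ⊂ Reach G X K' := by
  rw [ssubset_iff_subset_not_subset, ssubset_iff_subset_not_subset]
  constructor
  · rintro ⟨h1, h2⟩
    exact ⟨NR_mono_of_NR hK.1 hK'.1 h1, fun hc => h2 (NR_mono_of_reach hK' hK hc)⟩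
  · rintro ⟨h1, h2⟩
    exact ⟨NR_mono_of_reach hK hK' h1, fun hc => h2 (NR_mono_of_NR hK'.1 hK.1 hc)⟩
end

section
/- If K is an important X–Y separator of G, then the graph Pr(G,X,Y,K) is X–Y normalized. -/
variable {V : Type*}

open SimpleGraph

lemma not_mem_NR' {G : SimpleGraph V} {Y B : Set V} {v : V} (h : v ∉ NR G Y B) :
    v ∈ B ∨ ∃ y ∈ Y, ∃ w : G.Walk y v, ∀ x ∈ w.support, x ∉ B := by
  simp only [NR, Set.mem_setOf_eq, not_and, not_not] at h
  by_cases hv : v ∈ B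
  · exact Or.inl hv
  · exact Or.inr (h hv)

lemma reach_extend {G : SimpleGraph V} {Y B : Set V} {u v : V}
    (h : ∃ y ∈ Y, ∃ w : G.Walk y u, ∀ x ∈ w.support, x ∉ B)
    (hadj : G.Adj u v) (hv : v ∉ B) :
    ∃ y ∈ Y, ∃ w : G.Walk y v, ∀ x ∈ w.support, x ∉ B := by
  obtain ⟨y, hy, w, hw⟩ := h
  refine ⟨y, hy, w.concat hadj, ?_⟩
  intro x hx
  rw [Walk.support_concat, List.mem_append] at hx
  rcases hx with hx | hx
  · exact hw x hx
  · simp at hx; subst hx; exact hv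

lemma prWalk_not_D {G : SimpleGraph V} {X Y K : Set V} :
    ∀ {u v : V} (w : (PrGraph G X Y K).Walk u v) (z : V), z ∈ w.support →
      z ∉ NR G Y K \ X ∨ z = u := by
  intro u v w
  induction w with
  | nil => intro z hz; rw [Walk.support_nil] at hz; simp at hz; exact Or.inr hz
  | cons h w ih =>
    intro z hz
    rw [Walk.support_cons] at hz
    rcases List.mem_cons.mp hz with rfl | hz
    · exact Or.inl h.2.1
    · rcases ih z hz with h' | rfl
      · exact Or.inl h'
      · exact Or.inl h.2.2.1

lemma prWalk_toG {G : SimpleGraph V} {X Y K : Set V} :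
    ∀ {u v : V} (w : (PrGraph G X Y K).Walk u v), (∀ z ∈ w.support, z ∉ K) →
      ∃ w₂ : G.Walk u v, ∀ z ∈ w₂.support, z ∈ w.support := by
  intro u v w
  induction w with
  | nil => exact fun _ => ⟨Walk.nil, fun z hz => hz⟩
  | @cons a b c h w ih =>
    intro hK
    have hu : a ∉ K := hK _ (Walk.start_mem_support _)
    have hb : b ∉ K := hK _ (by rw [Walk.support_cons]; exact List.mem_cons_of_mem _ (Walk.start_mem_support _))
    have hadj : G.Adj a b := by
      rcases h.2.2.2 with h' | h' | h'
      · exact h'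
      · exact absurd h'.2 hb
      · exact absurd h'.1 hu
    obtain ⟨w₂, hw₂⟩ := ih (fun z hz => hK z (by rw [Walk.support_cons]; exact List.mem_cons_of_mem _ hz))
    refine ⟨Walk.cons hadj w₂, ?_⟩
    intro z hz
    rw [Walk.support_cons] at hz ⊢
    rcases List.mem_cons.mp hz with rfl | hz
    · exact List.mem_cons_self
    · exact List.mem_cons_of_mem _ (hw₂ z hz)

lemma walk_transfer_pr {G : SimpleGraph V} {X Y K : Set V} :
    ∀ {u v : V} (w : G.Walk u v), (∀ z ∈ w.support, z ∉ NR G Y K \ X) →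
      ∃ w' : (PrGraph G X Y K).Walk u v, ∀ z ∈ w'.support, z ∈ w.support := by
  intro u v w
  induction w with
  | nil => exact fun _ => ⟨Walk.nil, fun z hz => hz⟩
  | cons h w ih =>
    intro hD
    have hu := hD _ (Walk.start_mem_support _)
    have hb := hD _ (by rw [Walk.support_cons]; exact List.mem_cons_of_mem _ (Walk.start_mem_support _))
    obtain ⟨w', hw'⟩ := ih (fun z hz => hD z (by rw [Walk.support_cons]; exact List.mem_cons_of_mem _ hz))
    refine ⟨Walk.cons (show (PrGraph G X Y K).Adj _ _ from ⟨h.ne, hu, hb, Or.inl h⟩) w', ?_⟩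
    intro z hz
    rw [Walk.support_cons] at hz ⊢
    rcases List.mem_cons.mp hz with rfl | hz
    · exact List.mem_cons_self
    · exact List.mem_cons_of_mem _ (hw' z hz)

lemma first_hit {G : SimpleGraph V} {S : Set V} :
    ∀ {u v : V} (w : G.Walk u v), (∃ z ∈ w.support, z ∈ S) →
      ∃ p ∈ S, ∃ wp : G.Walk u p, (∀ z ∈ wp.support, z ∈ w.support) ∧
        (∀ z ∈ wp.support, z ≠ p → z ∉ S) := by
  intro u v w
  induction w with
  | nil =>
    rintro ⟨z, hz, hzS⟩
    rw [Walk.support_nil] at hz; simp at hz; subst hz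
    exact ⟨z, hzS, Walk.nil, fun t ht => ht, fun t ht hne => by simp at ht; exact absurd ht hne⟩
  | @cons a b c h w ih =>
    rintro ⟨z, hz, hzS⟩
    by_cases huS : a ∈ S
    · exact ⟨a, huS, Walk.nil, fun t ht => by simp at ht; subst ht; exact Walk.start_mem_support _,
        fun t ht hne => by simp at ht; exact absurd ht hne⟩
    · rw [Walk.support_cons] at hz
      rcases List.mem_cons.mp hz with rfl | hz
      · exact absurd hzS huS
      · obtain ⟨p, hpS, wp, hsub, hfirst⟩ := ih ⟨z, hz, hzS⟩
        refine ⟨p, hpS, Walk.cons h wp, ?_, ?_⟩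
        · intro t ht
          rw [Walk.support_cons] at ht ⊢
          rcases List.mem_cons.mp ht with rfl | ht
          · exact List.mem_cons_self
          · exact List.mem_cons_of_mem _ (hsub t ht)
        · intro t ht hne
          rw [Walk.support_cons] at ht
          rcases List.mem_cons.mp ht with rfl | ht
          · exact huS
          · exact hfirst t ht hne

lemma walk_toPr {G : SimpleGraph V} {X Y K : Set V} :
    ∀ {u v : V} (w : G.Walk u v), v ∉ NR G Y K \ X →
      ∃ p ∈ w.support, ((p = u ∧ u ∉ NR G Y K \ X) ∨ p ∈ X ∪ K) ∧
        ∃ w' : (PrGraph G X Y K).Walk p v, ∀ z ∈ w'.support, z ∈ w.support := by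
  intro u v w
  induction w with
  | nil =>
    intro hv
    exact ⟨_, Walk.start_mem_support _, Or.inl ⟨rfl, hv⟩, Walk.nil, fun z hz => hz⟩
  | @cons a b c h w ih =>
    intro hv
    obtain ⟨p, hpmem, hp, w', hw'⟩ := ih hv
    have hmem : ∀ z ∈ w.support, z ∈ (Walk.cons h w).support := by
      intro z hz; rw [Walk.support_cons]; exact List.mem_cons_of_mem _ hz
    rcases hp with ⟨rfl, hbD⟩ | hpXK
    · -- p = b (the middle vertex), b ∉ D
      by_cases huD : a ∈ NR G Y K \ X
      · -- u ∈ D : show b ∈ X ∪ K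
        by_cases hbX : p ∈ X
        · exact ⟨p, hmem _ hpmem, Or.inr (Or.inl hbX), w', fun z hz => hmem _ (hw' z hz)⟩
        · have hbNR : p ∉ NR G Y K := fun hn => hbD ⟨hn, hbX⟩
          rcases not_mem_NR' hbNR with hbK | hreach
          · exact ⟨p, hmem _ hpmem, Or.inr (Or.inr hbK), w', fun z hz => hmem _ (hw' z hz)⟩
          · exfalso
            have huK : a ∉ K := huD.1.1
            exact huD.1.2 (reach_extend hreach h.symm huK)
      · refine ⟨a, Walk.start_mem_support _, Or.inl ⟨rfl, huD⟩,
          Walk.cons (show (PrGraph G X Y K).Adj _ _ from ⟨h.ne, huD, hbD, Or.inl h⟩) w', ?_⟩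
        intro z hz
        rw [Walk.support_cons] at hz ⊢
        rcases List.mem_cons.mp hz with rfl | hz
        · exact List.mem_cons_self
        · exact List.mem_cons_of_mem _ (hw' z hz)
    · exact ⟨p, hmem _ hpmem, Or.inr hpXK, w', fun z hz => hmem _ (hw' z hz)⟩


/-- If `K` is an important `X`–`Y` separator of `G`, then the
graph `Pr(G,X,Y,K)` is `X`–`Y` normalized. -/
theorem PrGraph_normalized_of_important
    {V : Type*} [Fintype V] (G : SimpleGraph V) (X Y K : Set V)
    (hXY : Disjoint X Y) (hK : IsImportantSeparator G X Y K) :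
    Normalized (PrGraph G X Y K) X Y := by
  obtain ⟨⟨hKsep, hKmin⟩, hKimp⟩ := hK
  have hKXY := hKsep.1
  have hYnr : ∀ y ∈ Y, y ∉ NR G Y K := by
    intro y hy hn
    refine hn.2 ⟨y, hy, SimpleGraph.Walk.nil, ?_⟩
    intro x hx
    rw [SimpleGraph.Walk.support_nil] at hx
    simp at hx; subst hx
    exact fun hxK => hKXY hxK (Or.inr hy)
  rcases Set.eq_empty_or_nonempty X with hXe | ⟨x₀, hx₀⟩
  · have hKe : K = ∅ := by
      by_contra hne
      exact hKmin ∅ (Set.empty_ssubset.mpr (Set.nonempty_iff_ne_empty.mpr hne))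
        ⟨Set.empty_subset _, fun x hx => absurd hx (by rw [hXe]; exact Set.notMem_empty x)⟩
    have hNS : NSet (PrGraph G X Y K) X = ∅ := by
      ext v; simp [NSet, hXe]
    constructor
    · rw [hNS]
      exact ⟨Set.empty_subset _,
        fun x hx => absurd hx (by rw [hXe]; exact Set.notMem_empty x)⟩
    · intro K'' hsep'' hne
      rw [hNS] at hne ⊢
      rw [Set.ncard_empty]
      exact (Set.ncard_pos (Set.toFinite _)).mpr (Set.nonempty_iff_ne_empty.mpr hne)
  · have hNS : NSet (PrGraph G X Y K) X = K := by
      ext v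
      constructor
      · rintro ⟨hvX, x, hx, hne, hxD, hvD, hcase⟩
        rcases hcase with hGadj | h | h
        · by_contra hvK
          have hvNR : v ∉ NR G Y K := fun hn => hvD ⟨hn, hvX⟩
          rcases not_mem_NR' hvNR with h | hreach
          · exact hvK h
          · have hxK : x ∉ K := fun h => hKXY h (Or.inl hx)
            obtain ⟨y, hy, w, hw⟩ := reach_extend hreach hGadj.symm hxK
            obtain ⟨z, hz, hzK⟩ := hKsep.2 x hx y hy w.reverse
            rw [SimpleGraph.Walk.support_reverse, List.mem_reverse] at hz
            exact hw z hz hzK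
        · exact h.2
        · exact absurd h.2 hvX
      · intro hvK
        have hvnX : v ∉ X := fun h => hKXY hvK (Or.inl h)
        exact ⟨hvnX, x₀, hx₀, fun h => hvnX (h ▸ hx₀), fun h => h.2 hx₀,
          fun h => h.1.1 hvK, Or.inr (Or.inl ⟨hx₀, hvK⟩)⟩
    constructor
    · rw [hNS]
      refine ⟨hKXY, ?_⟩
      intro x hx y hy w
      by_contra hc
      push_neg at hc
      obtain ⟨w₂, hw₂⟩ := prWalk_toG w hc
      obtain ⟨z, hz, hzK⟩ := hKsep.2 x hx y hy w₂
      exact hc z (hw₂ z hz) hzK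
    · intro K'' hsep'' hne
      rw [hNS] at hne ⊢
      by_contra hlt
      push_neg at hlt
      set K₀ : Set V := K'' \ (NR G Y K \ X) with hK₀def
      have hK₀K'' : K₀ ⊆ K'' := Set.diff_subset
      have hK₀sub : K₀ ⊆ (X ∪ Y)ᶜ := hK₀K''.trans hsep''.1
      have hK₀X : ∀ z ∈ K₀, z ∉ X := fun z hz h => hK₀sub hz (Or.inl h)
      have hK₀NR : ∀ v, v ∈ NR G Y K → v ∉ K₀ := by
        intro v hv h
        by_cases hvX : v ∈ X
        · exact hK₀X _ h hvX
        · exact h.2 ⟨hv, hvX⟩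
      have hK₀sep' : IsSeparator (PrGraph G X Y K) X Y K₀ := by
        refine ⟨hK₀sub, ?_⟩
        intro x hx y hy w
        obtain ⟨z, hz, hzK''⟩ := hsep''.2 x hx y hy w
        refine ⟨z, hz, hzK'', ?_⟩
        rcases prWalk_not_D w z hz with h | rfl
        · exact h
        · exact fun h => h.2 hx
      have hK₀sep : IsSeparator G X Y K₀ := by
        refine ⟨hK₀sub, ?_⟩
        intro x hx y hy w
        by_contra hc
        push_neg at hc
        have hyD : y ∉ NR G Y K \ X := fun h => hYnr y hy h.1
        obtain ⟨p, hpw, hp, w', hw'⟩ := walk_toPr w hyD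
        have hw'K₀ : ∀ z ∈ w'.support, z ∉ K₀ := fun z hz => hc z (hw' z hz)
        have hdone : ∀ q ∈ X, ∀ w'' : (PrGraph G X Y K).Walk q y,
            (∀ z ∈ w''.support, z ∉ K₀) → False := by
          intro q hq w'' hav
          obtain ⟨z, hz, h⟩ := hK₀sep'.2 q hq y hy w''
          exact hav z hz h
        rcases hp with ⟨hpx, -⟩ | hpXK
        · exact hdone p (hpx.symm ▸ hx) w' hw'K₀
        rcases hpXK with hpX | hpK
        · exact hdone p hpX w' hw'K₀
        · have hpD : p ∉ NR G Y K \ X := fun h => h.1.1 hpK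
          have hadj : (PrGraph G X Y K).Adj x p :=
            ⟨fun h => hKXY hpK (Or.inl (h ▸ hx)), fun h => h.2 hx, hpD,
             Or.inr (Or.inl ⟨hx, hpK⟩)⟩
          refine hdone x hx (SimpleGraph.Walk.cons hadj w') ?_
          intro z hz
          rw [SimpleGraph.Walk.support_cons] at hz
          rcases List.mem_cons.mp hz with rfl | hz
          · exact fun h => hK₀sub h (Or.inl hx)
          · exact hw'K₀ z hz
      have hle : NR G Y K ⊆ NR G Y K₀ := by
        intro v hv
        refine ⟨hK₀NR v hv, ?_⟩
        rintro ⟨y, hy, w, hw⟩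
        have hvS : v ∈ (NR G Y K \ X) ∪ X ∪ K := by
          by_cases hvX : v ∈ X
          · exact Or.inl (Or.inr hvX)
          · exact Or.inl (Or.inl ⟨hv, hvX⟩)
        obtain ⟨p, hpS, wp, hsub, hfirst⟩ :=
          first_hit w ⟨v, SimpleGraph.Walk.end_mem_support _, hvS⟩
        have hwpK₀ : ∀ z ∈ wp.support, z ∉ K₀ := fun z hz => hw z (hsub z hz)
        rcases hpS with (hpD | hpX) | hpK
        · refine hpD.1.2 ⟨y, hy, wp, ?_⟩
          intro z hz
          by_cases hzp : z = p
          · subst hzp; exact hpD.1.1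
          · exact fun hzK => hfirst z hz hzp (Or.inr hzK)
        · obtain ⟨z, hz, hzK⟩ := hKsep.2 p hpX y hy wp.reverse
          rw [SimpleGraph.Walk.support_reverse, List.mem_reverse] at hz
          by_cases hzp : z = p
          · subst hzp; exact hKXY hzK (Or.inl hpX)
          · exact hfirst z hz hzp (Or.inr hzK)
        · have hwpD : ∀ z ∈ wp.support, z ∉ NR G Y K \ X := by
            intro z hz
            by_cases hzp : z = p
            · subst hzp; exact fun h => h.1.1 hpK
            · exact fun h => hfirst z hz hzp (Or.inl (Or.inl h))
          obtain ⟨w', hw'⟩ := walk_transfer_pr wp.reverse (by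
            intro z hz
            rw [SimpleGraph.Walk.support_reverse, List.mem_reverse] at hz
            exact hwpD z hz)
          have hadj : (PrGraph G X Y K).Adj x₀ p :=
            ⟨fun h => hKXY hpK (Or.inl (h ▸ hx₀)), fun h => h.2 hx₀,
             fun h => h.1.1 hpK, Or.inr (Or.inl ⟨hx₀, hpK⟩)⟩
          obtain ⟨z, hz, hzK₀⟩ := hK₀sep'.2 x₀ hx₀ y hy (SimpleGraph.Walk.cons hadj w')
          rw [SimpleGraph.Walk.support_cons] at hz
          rcases List.mem_cons.mp hz with rfl | hz
          · exact hK₀sub hzK₀ (Or.inl hx₀)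
          · have hzw := hw' z hz
            rw [SimpleGraph.Walk.support_reverse, List.mem_reverse] at hzw
            exact hwpK₀ z hzw hzK₀
      have heq : NR G Y K = NR G Y K₀ := by
        by_contra hne'
        exact hKimp ⟨K₀, hK₀sep, ⟨hle, hne'⟩,
          le_trans (Set.ncard_le_ncard hK₀K'' (Set.toFinite _)) hlt⟩
      have hKsubK₀ : K ⊆ K₀ := by
        intro k hk
        by_contra hkK₀
        have hkNR : k ∉ NR G Y K₀ := by
          rw [← heq]; exact fun h => h.1 hk
        rcases not_mem_NR' hkNR with h | hreach
        · exact hkK₀ h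
        obtain ⟨y₂, hy₂, wy, hwy⟩ := hreach
        have hss : K \ {k} ⊂ K :=
          (Set.ssubset_iff_of_subset Set.diff_subset).mpr ⟨k, hk, fun h => h.2 rfl⟩
        have hnotsep := hKmin _ hss
        have hex : ∃ x ∈ X, ∃ y' ∈ Y, ∃ w : G.Walk x y',
            ∀ z ∈ w.support, z ∉ K \ {k} := by
          by_contra hc
          push_neg at hc
          exact hnotsep ⟨Set.diff_subset.trans hKXY, hc⟩
        obtain ⟨x, hx, y', hy', w, hwk⟩ := hex
        obtain ⟨q, hq, hqK⟩ := hKsep.2 x hx y' hy' w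
        obtain ⟨p, hpS, wp, hsub, hfirst⟩ :=
          first_hit (S := K ∪ K₀) w ⟨q, hq, Or.inl hqK⟩
        by_cases hpK : p ∈ K
        · have hpk : p = k := by
            have hnot := hwk p (hsub p (SimpleGraph.Walk.end_mem_support _))
            by_contra hne2
            exact hnot ⟨hpK, hne2⟩
          obtain ⟨wy', hwy'⟩ : ∃ w2 : G.Walk y₂ p, ∀ z ∈ w2.support, z ∉ K₀ := by
            rw [hpk]; exact ⟨wy, hwy⟩
          obtain ⟨z, hz, hzK₀⟩ := hK₀sep.2 x hx y₂ hy₂ (wp.append wy'.reverse)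
          rw [SimpleGraph.Walk.mem_support_append_iff] at hz
          rcases hz with hz | hz
          · by_cases hzp : z = p
            · subst hzp
              exact hkK₀ (hpk ▸ hzK₀)
            · exact hfirst z hz hzp (Or.inr hzK₀)
          · rw [SimpleGraph.Walk.support_reverse, List.mem_reverse] at hz
            exact hwy' z hz hzK₀
        · have hpK₀ : p ∈ K₀ := by
            rcases hpS with h | h
            · exact absurd h hpK
            · exact h
          have hpNR : p ∉ NR G Y K := by
            rw [heq]; exact fun h => h.1 hpK₀
          rcases not_mem_NR' hpNR with h | hreach2
          · exact hpK h
          obtain ⟨y₃, hy₃, w₃, hw₃⟩ := hreach2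
          obtain ⟨z, hz, hzK⟩ := hKsep.2 x hx y₃ hy₃ (wp.append w₃.reverse)
          rw [SimpleGraph.Walk.mem_support_append_iff] at hz
          rcases hz with hz | hz
          · by_cases hzp : z = p
            · subst hzp; exact hpK hzK
            · exact hfirst z hz hzp (Or.inl hzK)
          · rw [SimpleGraph.Walk.support_reverse, List.mem_reverse] at hz
            exact hw₃ z hz hzK
      exact hne (Set.eq_of_subset_of_ncard_le (hKsubK₀.trans hK₀K'') hlt
        (Set.toFinite _)).symm
end

section
/- Let G be an X–Y normalized graph, let S ⊆ N(X) be a set such that no vertex of S is adjacent to a vertex of Y, let K(S) be the unique important witness of S, and let K1 be an important X–Y separator of G disjoint from S. Then K1 ≥ K(S). -/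
variable {V : Type*}

section Aux

open SimpleGraph

lemma reach_self' (G : SimpleGraph V) {Y K : Set V} {y : V} (hy : y ∈ Y) (hyK : y ∉ K) :
    y ∈ Reach G Y K := by
  refine ⟨y, hy, Walk.nil, ?_⟩
  intro x hx
  simp only [Walk.support_nil, List.mem_singleton] at hx
  subst hx; exact hyK

lemma reach_not_mem' {G : SimpleGraph V} {Y K : Set V} {v : V} (h : v ∈ Reach G Y K) :
    v ∉ K := by
  obtain ⟨a, _, w, hw⟩ := h
  exact hw v w.end_mem_support

lemma nr_iff' {G : SimpleGraph V} {Y K : Set V} {v : V} :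
    v ∈ NR G Y K ↔ v ∉ K ∧ v ∉ Reach G Y K := Iff.rfl

lemma tri' (G : SimpleGraph V) (Y K : Set V) (v : V) :
    v ∈ K ∨ v ∈ NR G Y K ∨ v ∈ Reach G Y K := by
  by_cases h1 : v ∈ K
  · exact Or.inl h1
  by_cases h2 : v ∈ Reach G Y K
  · exact Or.inr (Or.inr h2)
  · exact Or.inr (Or.inl ⟨h1, h2⟩)

lemma reach_adj' {G : SimpleGraph V} {Y K : Set V} {u v : V}
    (hu : u ∈ Reach G Y K) (huv : G.Adj u v) (hv : v ∉ K) :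
    v ∈ Reach G Y K := by
  obtain ⟨a, ha, w, hw⟩ := hu
  refine ⟨a, ha, w.append (Walk.cons huv Walk.nil), ?_⟩
  intro x hx
  rw [Walk.mem_support_append_iff] at hx
  rcases hx with hx | hx
  · exact hw x hx
  · simp only [Walk.support_cons, Walk.support_nil, List.mem_cons,
      List.mem_singleton] at hx
    rcases hx with rfl | rfl | h
    · exact hw _ w.end_mem_support
    · exact hv
    · exact absurd h (by simp)

lemma walk_inv' {G : SimpleGraph V} (K : Set V) (P : V → Prop)
    (hstep : ∀ ⦃u v : V⦄, G.Adj u v → P u → u ∉ K → v ∉ K → P v) :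
    ∀ {a b : V} (w : G.Walk a b), (∀ x ∈ w.support, x ∉ K) → P a → P b := by
  intro a b w
  induction w with
  | nil => exact fun _ h => h
  | @cons u v b h w ih =>
    intro hw ha
    have huK : u ∉ K := hw u (by rw [Walk.support_cons]; exact List.mem_cons_self)
    have hvK : v ∉ K := hw v (by
      rw [Walk.support_cons]; exact List.mem_cons_of_mem _ w.start_mem_support)
    refine ih (fun x hx => hw x (by rw [Walk.support_cons]; exact List.mem_cons_of_mem _ hx))
      (hstep h ha huK hvK)

lemma X_subset_NR' {G : SimpleGraph V} {X Y K : Set V} (hK : IsSeparator G X Y K) :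
    X ⊆ NR G Y K := by
  intro x hx
  refine ⟨fun hxK => hK.1 hxK (Or.inl hx), ?_⟩
  rintro ⟨a, ha, w, hw⟩
  obtain ⟨v, hv, hvK⟩ := hK.2 x hx a ha w.reverse
  rw [Walk.support_reverse, List.mem_reverse] at hv
  exact hw v hv hvK

lemma Y_not_mem' {G : SimpleGraph V} {X Y K : Set V} (hK : IsSeparator G X Y K)
    {y : V} (hy : y ∈ Y) : y ∉ K :=
  fun hyK => hK.1 hyK (Or.inr hy)

/-- The "meet" of two separators is a separator. -/
lemma meet_separator' {G : SimpleGraph V} {X Y K1 K2 : Set V}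
    (h1 : IsSeparator G X Y K1) (h2 : IsSeparator G X Y K2) :
    IsSeparator G X Y ((K1 ∪ K2) \ (Reach G Y K1 ∪ Reach G Y K2)) := by
  constructor
  · intro v hv
    rcases hv.1 with h | h
    · exact h1.1 h
    · exact h2.1 h
  · intro x hx y hy w
    by_contra hcon
    push_neg at hcon
    have hstep : ∀ ⦃u v : V⦄, G.Adj u v →
        (u ∈ Reach G Y K1 ∪ Reach G Y K2) →
        u ∉ (K1 ∪ K2) \ (Reach G Y K1 ∪ Reach G Y K2) →
        v ∉ (K1 ∪ K2) \ (Reach G Y K1 ∪ Reach G Y K2) →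
        v ∈ Reach G Y K1 ∪ Reach G Y K2 := by
      intro u v huv hu _ hvK
      by_cases hvR : v ∈ Reach G Y K1 ∪ Reach G Y K2
      · exact hvR
      by_cases hv12 : v ∈ K1 ∪ K2
      · exact absurd ⟨hv12, hvR⟩ hvK
      rcases hu with hu | hu
      · exact Or.inl (reach_adj' hu huv (fun h => hv12 (Or.inl h)))
      · exact Or.inr (reach_adj' hu huv (fun h => hv12 (Or.inr h)))
    have hx' : x ∈ Reach G Y K1 ∪ Reach G Y K2 := by
      refine walk_inv' _ _ hstep w.reverse ?_ ?_
      · intro z hz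
        rw [Walk.support_reverse, List.mem_reverse] at hz
        exact hcon z hz
      · exact Or.inl (reach_self' G hy (Y_not_mem' h1 hy))
    have hx1 := X_subset_NR' h1 hx
    have hx2 := X_subset_NR' h2 hx
    rcases hx' with h | h
    · exact hx1.2 h
    · exact hx2.2 h

/-- Invariant for the "join": along any walk avoiding the join-separator which starts
outside `NR K1 ∪ NR K2`, one stays outside `NR K1 ∪ NR K2`. -/
lemma join_inv' {G : SimpleGraph V} {Y K1 K2 : Set V} {a b : V} (w : G.Walk a b)
    (hw : ∀ x ∈ w.support, x ∉ (K1 ∪ K2) \ (NR G Y K1 ∪ NR G Y K2))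
    (ha : a ∉ NR G Y K1 ∪ NR G Y K2) : b ∉ NR G Y K1 ∪ NR G Y K2 := by
  refine walk_inv' _ (fun v => v ∉ NR G Y K1 ∪ NR G Y K2) ?_ w hw ha
  intro u v huv hu huK hvK
  intro hv
  rcases hv with hv | hv
  · rcases tri' G Y K1 u with h | h | h
    · exact huK ⟨Or.inl h, hu⟩
    · exact hu (Or.inl h)
    · exact hv.2 (reach_adj' h huv hv.1)
  · rcases tri' G Y K2 u with h | h | h
    · exact huK ⟨Or.inr h, hu⟩
    · exact hu (Or.inr h)
    · exact hv.2 (reach_adj' h huv hv.1)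

/-- The "join" of two separators is a separator. -/
lemma join_separator' {G : SimpleGraph V} {X Y K1 K2 : Set V}
    (h1 : IsSeparator G X Y K1) (h2 : IsSeparator G X Y K2) :
    IsSeparator G X Y ((K1 ∪ K2) \ (NR G Y K1 ∪ NR G Y K2)) := by
  constructor
  · intro v hv
    rcases hv.1 with h | h
    · exact h1.1 h
    · exact h2.1 h
  · intro x hx y hy w
    by_contra hcon
    push_neg at hcon
    have hx' : x ∉ NR G Y K1 ∪ NR G Y K2 := by
      refine join_inv' w.reverse ?_ ?_
      · intro z hz
        rw [Walk.support_reverse, List.mem_reverse] at hz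
        exact hcon z hz
      · rintro (hy' | hy')
        · exact hy'.2 (reach_self' G hy (Y_not_mem' h1 hy))
        · exact hy'.2 (reach_self' G hy (Y_not_mem' h2 hy))
    exact hx' (Or.inl (X_subset_NR' h1 hx))

/-- `NR` of the join contains the union of the `NR`s. -/
lemma nr_join_superset' {G : SimpleGraph V} {X Y K1 K2 : Set V}
    (h1 : IsSeparator G X Y K1) (h2 : IsSeparator G X Y K2) :
    NR G Y K1 ∪ NR G Y K2 ⊆ NR G Y ((K1 ∪ K2) \ (NR G Y K1 ∪ NR G Y K2)) := by
  intro v hv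
  refine ⟨fun h => h.2 hv, ?_⟩
  rintro ⟨a, ha, w, hw⟩
  refine (join_inv' w hw ?_) hv
  rintro (hy' | hy')
  · exact hy'.2 (reach_self' G ha (Y_not_mem' h1 ha))
  · exact hy'.2 (reach_self' G ha (Y_not_mem' h2 ha))

lemma prop_union' (a b r s : Prop) (h1 : a → ¬r) (h2 : b → ¬s) :
    ((a ∨ b) ∧ ¬(r ∨ s)) ∨ ((a ∨ b) ∧ ¬((¬a ∧ ¬r) ∨ (¬b ∧ ¬s))) ↔ (a ∨ b) := by
  tauto

lemma prop_inter' (a b r s : Prop) (h1 : a → ¬r) (h2 : b → ¬s) :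
    ((a ∨ b) ∧ ¬(r ∨ s)) ∧ ((a ∨ b) ∧ ¬((¬a ∧ ¬r) ∨ (¬b ∧ ¬s))) ↔ (a ∧ b) := by
  tauto

/-- The submodularity (in fact modularity) size identity. -/
lemma meet_join_card' [Fintype V] {G : SimpleGraph V} {Y K1 K2 : Set V}
    (hK1R : ∀ v ∈ K1, v ∉ Reach G Y K1) (hK2R : ∀ v ∈ K2, v ∉ Reach G Y K2) :
    ((K1 ∪ K2) \ (Reach G Y K1 ∪ Reach G Y K2)).ncard
      + ((K1 ∪ K2) \ (NR G Y K1 ∪ NR G Y K2)).ncard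
      = K1.ncard + K2.ncard := by
  have hunion : ((K1 ∪ K2) \ (Reach G Y K1 ∪ Reach G Y K2))
      ∪ ((K1 ∪ K2) \ (NR G Y K1 ∪ NR G Y K2)) = K1 ∪ K2 := by
    ext u
    have n1 : u ∈ NR G Y K1 ↔ u ∉ K1 ∧ u ∉ Reach G Y K1 := nr_iff'
    have n2 : u ∈ NR G Y K2 ↔ u ∉ K2 ∧ u ∉ Reach G Y K2 := nr_iff'
    simp only [Set.mem_union, Set.mem_diff, Set.mem_union, n1, n2]
    exact prop_union' _ _ _ _ (hK1R u) (hK2R u)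
  have hinter : ((K1 ∪ K2) \ (Reach G Y K1 ∪ Reach G Y K2))
      ∩ ((K1 ∪ K2) \ (NR G Y K1 ∪ NR G Y K2)) = K1 ∩ K2 := by
    ext u
    have n1 : u ∈ NR G Y K1 ↔ u ∉ K1 ∧ u ∉ Reach G Y K1 := nr_iff'
    have n2 : u ∈ NR G Y K2 ↔ u ∉ K2 ∧ u ∉ Reach G Y K2 := nr_iff'
    simp only [Set.mem_inter_iff, Set.mem_diff, Set.mem_union, n1, n2]
    exact prop_inter' _ _ _ _ (hK1R u) (hK2R u)
  have h1 := Set.ncard_union_add_ncard_inter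
    ((K1 ∪ K2) \ (Reach G Y K1 ∪ Reach G Y K2))
    ((K1 ∪ K2) \ (NR G Y K1 ∪ NR G Y K2))
  have h2 := Set.ncard_union_add_ncard_inter K1 K2
  rw [hunion, hinter] at h1
  omega

end Aux

/-- Let `G` be an `X`–`Y` normalized graph, `S ⊆ N(X)` with no
vertex of `S` adjacent to a vertex of `Y`, `K(S)` the unique important witness
of `S`, and `K1` an important `X`–`Y` separator of `G` disjoint from `S`.
Then `K1 ≥ K(S)`. -/
theorem important_separator_ge_important_witness
    {V : Type*} [Fintype V] (G : SimpleGraph V) (X Y S KS K1 : Set V)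
    (hXY : Disjoint X Y) (hnorm : Normalized G X Y)
    (hS : S ⊆ NSet G X) (hSY : ∀ s ∈ S, ∀ y ∈ Y, ¬ G.Adj s y)
    (hKS : IsImportantWitness G X Y S KS)
    (hK1 : IsImportantSeparator G X Y K1) (hdisj : Disjoint K1 S) :
    SepLE G Y KS K1 := by
  obtain ⟨⟨hKSsep, hKSdisj, hKSex⟩, _⟩ := hKS
  obtain ⟨⟨hK1sep, _⟩, hK1imp⟩ := hK1
  by_contra hcon
  have hcon' : ¬ NR G Y KS ⊆ NR G Y K1 := hcon
  obtain ⟨a, haA, haB⟩ := Set.not_subset.mp hcon'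
  have hjsep := join_separator' hKSsep hK1sep
  have hmsep := meet_separator' hKSsep hK1sep
  have hsup := nr_join_superset' hKSsep hK1sep
  -- `K1 < Kjoin`, so by importance of `K1`, `|Kjoin| > |K1|`.
  have hBsub : NR G Y K1 ⊆ NR G Y ((KS ∪ K1) \ (NR G Y KS ∪ NR G Y K1)) :=
    fun v hv => hsup (Or.inr hv)
  have hne : NR G Y K1 ≠ NR G Y ((KS ∪ K1) \ (NR G Y KS ∪ NR G Y K1)) := by
    intro h
    have ha' : a ∈ NR G Y ((KS ∪ K1) \ (NR G Y KS ∪ NR G Y K1)) := hsup (Or.inl haA)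
    rw [← h] at ha'
    exact haB ha'
  have hlt : K1.ncard < ((KS ∪ K1) \ (NR G Y KS ∪ NR G Y K1)).ncard := by
    by_contra hle
    exact hK1imp ⟨_, hjsep, ⟨hBsub, hne⟩, Nat.le_of_not_lt hle⟩
  have hcard := meet_join_card' (G := G) (Y := Y) (K1 := KS) (K2 := K1)
    (fun v hv hR => reach_not_mem' hR hv) (fun v hv hR => reach_not_mem' hR hv)
  have hmlt : ((KS ∪ K1) \ (Reach G Y KS ∪ Reach G Y K1)).ncard < KS.ncard := by omega
  have hmin : minSepSize G X Y ≤ ((KS ∪ K1) \ (Reach G Y KS ∪ Reach G Y K1)).ncard :=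
    Nat.sInf_le ⟨_, hmsep, rfl⟩
  have hmdisj : Disjoint ((KS ∪ K1) \ (Reach G Y KS ∪ Reach G Y K1)) S :=
    Set.disjoint_of_subset_left Set.diff_subset
      (Set.disjoint_union_left.mpr ⟨hKSdisj, hdisj⟩)
  have hCE : CE G X Y S ≤ excess G X Y ((KS ∪ K1) \ (Reach G Y KS ∪ Reach G Y K1)) :=
    Nat.sInf_le ⟨_, hmsep, hmdisj, rfl⟩
  have hex : excess G X Y ((KS ∪ K1) \ (Reach G Y KS ∪ Reach G Y K1))
      < excess G X Y KS := by
    unfold excess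
    omega
  omega
end
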